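/- Let W : ℕ → ℝ be nonnegative, nondecreasing, concave with W(0) = 0 and curvature at most c ∈ (0,1] (i.e., W(n) - W(n-1) ≥ (1-c)W(1)). With η_1 = (2W(1)-W(2))/c, η_k = (2W(k)-W(k-1)-W(k+1))/c for 2 ≤ k ≤ n-1, and η_n = W(1) - Σ_{k<n} η_k, we have W(x) = Σ_{k=1}^{n} η_k · V^c_k(x) for all x = 0, 1, ..., n, where V^c_k(x) = (1-c)x + c·min(x,k). -/

import Mathlib

theorem concave_decomposition_coverage
    (W : ℕ → ℝ) (c : ℝ) (n : ℕ)
    (hc0 : 0 < c) (hc1 : c ≤ 1) (hn : 2 ≤ n)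
    (h0 : W 0 = 0)
    (hmono : ∀ x : ℕ, W x ≤ W (x + 1))
    (hconc : ∀ x : ℕ, 1 ≤ x → W (x + 1) - W x ≤ W x - W (x - 1))
    (hpos : ∀ x : ℕ, 1 ≤ x → 0 < W x)
    (hcurv : W n - W (n - 1) ≥ (1 - c) * W 1)
    (η : ℕ → ℝ)
    (hη1 : η 1 = (2 * W 1 - W 2) / c)
    (hηk : ∀ k : ℕ, 2 ≤ k → k ≤ n - 1 → η k = (2 * W k - W (k - 1) - W (k + 1)) / c)
    (hηn : η n = W 1 - ∑ k ∈ Finset.Icc 1 (n - 1), η k) :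
    ∀ x : ℕ, x ≤ n →
      W x = ∑ k ∈ Finset.Icc 1 n, η k * ((1 - c) * x + c * min x k) := by
  have hcne : c ≠ 0 := ne_of_gt hc0
  -- Lemma A: c * η k telescopes for 1 ≤ k ≤ n-1
  have hA : ∀ k : ℕ, 1 ≤ k → k ≤ n - 1 →
      c * η k = (W k - W (k - 1)) - (W (k + 1) - W k) := by
    intro k hk1 hkn
    rcases eq_or_lt_of_le hk1 with h | h
    · -- k = 1
      rw [← h, hη1, mul_div_cancel₀ _ hcne]
      simp [h0]; ring
    · have hk2 : 2 ≤ k := h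
      rw [hηk k hk2 hkn, mul_div_cancel₀ _ hcne]
      ring
  -- Lemma B: partial sums
  have hB : ∀ m : ℕ, m ≤ n - 1 →
      ∑ k ∈ Finset.Icc 1 m, c * η k = W 1 - (W (m + 1) - W m) := by
    intro m
    induction m with
    | zero => intro _; simp [h0]
    | succ m ih =>
      intro hm
      rw [Finset.sum_Icc_succ_top (by omega : 1 ≤ m + 1)]
      rw [ih (by omega), hA (m + 1) (by omega) hm]
      simp only [Nat.add_sub_cancel]
      ring
  -- total sum of η over Icc 1 n equals W 1
  have hsum : ∑ k ∈ Finset.Icc 1 n, η k = W 1 := by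
    have h1 : n = (n - 1) + 1 := by omega
    rw [h1, Finset.sum_Icc_succ_top (by omega : 1 ≤ n - 1 + 1), ← h1, hηn]
    ring
  -- tail sums
  have htail : ∀ x : ℕ, x ≤ n - 1 →
      ∑ k ∈ Finset.Icc (x + 1) n, c * η k = (W (x + 1) - W x) - (1 - c) * W 1 := by
    intro x hx
    have hsplit : (∑ k ∈ Finset.Ioc 0 x, c * η k) + ∑ k ∈ Finset.Ioc x n, c * η k
        = ∑ k ∈ Finset.Ioc 0 n, c * η k :=
      Finset.sum_Ioc_consecutive _ (by omega) (by omega)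
    have e1 : ∀ a b : ℕ, Finset.Ioc a b = Finset.Icc (a + 1) b := by
      intro a b; ext t; simp only [Finset.mem_Ioc, Finset.mem_Icc]; omega
    rw [e1, e1, e1] at hsplit
    have hBx := hB x hx
    have hBn : ∑ k ∈ Finset.Icc 1 n, c * η k = c * W 1 := by
      rw [← Finset.mul_sum, hsum]
    simp only [Nat.zero_add] at hsplit
    linarith
  -- main induction
  intro x
  induction x with
  | zero =>
    intro _
    simp [h0]
  | succ x ih =>
    intro hx
    have hx' : x ≤ n := by omega
    have hIH := ih hx'
    have hstep : ∀ k ∈ Finset.Icc 1 n,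
        η k * ((1 - c) * (↑(x + 1) : ℝ) + c * ↑(min (x + 1) k))
          = η k * ((1 - c) * (x : ℝ) + c * ↑(min x k)) + (1 - c) * η k
            + (if x + 1 ≤ k then c * η k else 0) := by
      intro k _
      by_cases h : x + 1 ≤ k
      · rw [if_pos h, Nat.min_eq_left h, Nat.min_eq_left (by omega)]
        push_cast; ring
      · rw [if_neg h, Nat.min_eq_right (by omega), Nat.min_eq_right (by omega)]
        push_cast; ring
    rw [Finset.sum_congr rfl hstep]
    rw [Finset.sum_add_distrib, Finset.sum_add_distrib]
    have hite : ∑ k ∈ Finset.Icc 1 n, (if x + 1 ≤ k then c * η k else 0)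
        = ∑ k ∈ Finset.Icc (x + 1) n, c * η k := by
      symm
      calc ∑ k ∈ Finset.Icc (x + 1) n, c * η k
          = ∑ k ∈ Finset.Icc (x + 1) n, (if x + 1 ≤ k then c * η k else 0) :=
            Finset.sum_congr rfl fun k hk => (if_pos (Finset.mem_Icc.mp hk).1).symm
        _ = ∑ k ∈ Finset.Icc 1 n, (if x + 1 ≤ k then c * η k else 0) := by
            refine Finset.sum_subset (Finset.Icc_subset_Icc (by omega) le_rfl)
              (fun k hk hk' => ?_)
            simp only [Finset.mem_Icc] at hk hk'
            rw [if_neg (by omega)]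
    rw [hite, htail x (by omega), ← Finset.mul_sum, hsum]
    linarith
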